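/- Let Y_1,...,Y_n be i.i.d. from the standard normal distribution right-truncated at η, and let Y_(n) be their maximum. With a_n = η - Φ_η^{-1}(1 - 1/n) and b_n = η, the normalized maximum (Y_(n) - η)/a_n converges in distribution to the reverse Weibull distribution with shape 1: lim_{n→∞} P((Y_(n) - η)/a_n ≤ x) = exp(x) for x ≤ 0 (i.e., exp(-(-x)) for x ≤ 0, and 1 for x > 0). -/

import Mathlib

open MeasureTheory ProbabilityTheory Filter Real

noncomputable def Phi (x : ℝ) : ℝ := ((gaussianReal 0 1) (Set.Iic x)).toReal

noncomputable def stdphi (x : ℝ) : ℝ := gaussianPDFReal 0 1 x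

noncomputable def PhiInv (p : ℝ) : ℝ := Function.invFun Phi p

noncomputable def truncNormal (η : ℝ) : Measure ℝ :=
  volume.withDensity (fun x => ENNReal.ofReal (if x < η then stdphi x / Phi η else 0))

/-- Quantile function of the truncated normal: Φ_η⁻¹(p) = Φ⁻¹(p Φ(η)). -/
noncomputable def truncQuantile (η p : ℝ) : ℝ := PhiInv (p * Phi η)

lemma stdphi_def : stdphi = gaussianPDFReal 0 1 := rfl

lemma stdphi_cont : Continuous stdphi := by
  unfold stdphi gaussianPDFReal
  fun_prop

lemma stdphi_pos (x : ℝ) : 0 < stdphi x := gaussianPDFReal_pos 0 1 x one_ne_zero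

lemma stdphi_integrable : Integrable stdphi := integrable_gaussianPDFReal 0 1

lemma Phi_eq (t : ℝ) : Phi t = ∫ x in Set.Iic t, stdphi x := by
  rw [Phi, gaussianReal_apply_eq_integral 0 one_ne_zero, ENNReal.toReal_ofReal
    (setIntegral_nonneg measurableSet_Iic fun x _ => gaussianPDFReal_nonneg 0 1 x)]
  rfl

lemma hasDerivAt_Phi (t : ℝ) : HasDerivAt Phi (stdphi t) t := by
  have key : ∀ u : ℝ, Phi u = Phi 0 + ∫ x in (0:ℝ)..u, stdphi x := by
    intro u
    rw [Phi_eq, Phi_eq, ← intervalIntegral.integral_Iic_sub_Iic stdphi_integrable.integrableOn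
      stdphi_integrable.integrableOn]
    ring
  have h : HasDerivAt (fun u => Phi 0 + ∫ x in (0:ℝ)..u, stdphi x) (stdphi t) t := by
    refine HasDerivAt.const_add _ ?_
    exact intervalIntegral.integral_hasDerivAt_right
      (stdphi_integrable.intervalIntegrable)
      (stdphi_cont.stronglyMeasurableAtFilter _ _)
      stdphi_cont.continuousAt
  exact h.congr_of_eventuallyEq (Filter.Eventually.of_forall fun u => (key u))

lemma Phi_cont : Continuous Phi :=
  continuous_iff_continuousAt.2 fun t => (hasDerivAt_Phi t).continuousAt

lemma Phi_strictMono : StrictMono Phi := by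
  apply strictMono_of_deriv_pos
  intro t
  rw [(hasDerivAt_Phi t).deriv]
  exact stdphi_pos t

lemma Phi_nonneg (t : ℝ) : 0 ≤ Phi t := ENNReal.toReal_nonneg

lemma Phi_pos (t : ℝ) : 0 < Phi t := by
  have h : Phi (t-1) < Phi t := Phi_strictMono (by linarith)
  have h2 : 0 < Phi t - Phi (t - 1) := by linarith
  linarith [Phi_nonneg (t-1)]

lemma exists_Phi_lt {ε : ℝ} (hε : 0 < ε) : ∃ s : ℝ, Phi s < ε := by
  have h : Tendsto (fun k : ℕ => (gaussianReal 0 1) (Set.Iic (-(k:ℝ)))) atTop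
      (nhds ((gaussianReal 0 1) (⋂ k : ℕ, Set.Iic (-(k:ℝ))))) := by
    apply tendsto_measure_iInter_atTop
    · exact fun k => measurableSet_Iic.nullMeasurableSet
    · intro i j hij
      exact Set.Iic_subset_Iic.2 (by exact_mod_cast neg_le_neg (Nat.cast_le.2 hij))
    · exact ⟨0, measure_ne_top _ _⟩
  have hempty : (⋂ k : ℕ, Set.Iic (-(k:ℝ))) = ∅ := by
    ext y
    simp only [Set.mem_iInter, Set.mem_Iic, Set.mem_empty_iff_false, iff_false, not_forall]
    obtain ⟨k, hk⟩ := exists_nat_gt (-y)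
    exact ⟨k, by push_neg; linarith⟩
  rw [hempty, measure_empty] at h
  have h2 : Tendsto (fun k : ℕ => Phi (-(k:ℝ))) atTop (nhds 0) := by
    have := (ENNReal.tendsto_toReal (by simp)).comp h
    exact this
  have := (h2.eventually (eventually_lt_nhds hε)).exists
  obtain ⟨k, hk⟩ := this
  exact ⟨-(k:ℝ), hk⟩

lemma exists_Phi_eq {η p : ℝ} (hp : 0 < p) (hpη : p ≤ Phi η) : ∃ q, q ≤ η ∧ Phi q = p := by
  obtain ⟨s, hs⟩ := exists_Phi_lt hp
  have hsη : min s η ≤ η := min_le_right _ _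
  have h1 : Phi (min s η) ≤ Phi s := Phi_strictMono.monotone (min_le_left _ _)
  have := intermediate_value_Icc hsη (Phi_cont.continuousOn (s := Set.Icc (min s η) η))
  have hmem : p ∈ Set.Icc (Phi (min s η)) (Phi η) := ⟨by linarith, hpη⟩
  obtain ⟨q, hq, hq2⟩ := this hmem
  exact ⟨q, hq.2, hq2⟩

lemma Phi_PhiInv {η p : ℝ} (hp : 0 < p) (hpη : p ≤ Phi η) : Phi (PhiInv p) = p := by
  obtain ⟨q, _, hq⟩ := exists_Phi_eq hp hpη
  exact Function.invFun_eq ⟨q, hq⟩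

lemma truncNormal_Iic {η t : ℝ} (ht : t ≤ η) :
    truncNormal η (Set.Iic t) = ENNReal.ofReal (Phi t / Phi η) := by
  rw [truncNormal, withDensity_apply _ measurableSet_Iic]
  have hne : ∀ᵐ x : ℝ, x ≠ η := by
    refine ae_iff.2 ?_
    have : {x : ℝ | ¬ x ≠ η} = {η} := by ext y; simp
    rw [this]
    exact measure_singleton η
  have hae : (fun x => ENNReal.ofReal (if x < η then stdphi x / Phi η else 0))
      =ᵐ[volume.restrict (Set.Iic t)] (fun x => ENNReal.ofReal (stdphi x / Phi η)) := by
    filter_upwards [ae_restrict_mem measurableSet_Iic, ae_restrict_of_ae hne] with x hx hxη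
    rw [if_pos (lt_of_le_of_ne (le_trans hx ht) hxη)]
  rw [lintegral_congr_ae hae,
    ← ofReal_integral_eq_lintegral_ofReal ((stdphi_integrable.div_const _).restrict)
      (ae_of_all _ fun x => div_nonneg (stdphi_pos x).le (Phi_pos η).le)]
  rw [integral_div, ← Phi_eq]

lemma pow_tendsto_exp {g : ℕ → ℝ} {l : ℝ}
    (hg : Tendsto (fun n : ℕ => (n:ℝ) * (1 - g n)) atTop (nhds l))
    (hpos : ∀ᶠ n in atTop, 0 < g n) (hne : ∀ᶠ n in atTop, g n ≠ 1) :
    Tendsto (fun n : ℕ => g n ^ n) atTop (nhds (Real.exp (-l))) := by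
  have hg1 : Tendsto g atTop (nhds 1) := by
    have h0 : Tendsto (fun n : ℕ => ((n:ℝ) * (1 - g n)) * (1/(n:ℝ))) atTop (nhds (l * 0)) :=
      hg.mul tendsto_one_div_atTop_nhds_zero_nat
    rw [mul_zero] at h0
    have heq : ∀ᶠ n : ℕ in atTop, ((n:ℝ) * (1 - g n)) * (1/(n:ℝ)) = 1 - g n := by
      filter_upwards [eventually_ge_atTop 1] with n hn
      have : (n:ℝ) ≠ 0 := Nat.cast_ne_zero.2 (by omega)
      field_simp
    have h1 : Tendsto (fun n : ℕ => 1 - g n) atTop (nhds 0) := h0.congr' heq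
    have h2 := h1.const_sub 1
    simpa using h2
  have hlog : Tendsto (fun n : ℕ => Real.log (g n) / (g n - 1)) atTop (nhds 1) := by
    have hd : HasDerivAt Real.log 1 1 := by
      simpa using Real.hasDerivAt_log one_ne_zero
    have hslope := hasDerivAt_iff_tendsto_slope.1 hd
    have hgne : Tendsto g atTop (nhdsWithin 1 {(1:ℝ)}ᶜ) :=
      tendsto_nhdsWithin_of_tendsto_nhds_of_eventually_within g hg1 hne
    have h3 := hslope.comp hgne
    refine h3.congr fun n => ?_
    simp [Function.comp, slope_def_field]
  -- n * log (g n) → -l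
  have hnlog : Tendsto (fun n : ℕ => (n:ℝ) * Real.log (g n)) atTop (nhds (-l)) := by
    have h4 : Tendsto (fun n : ℕ => (Real.log (g n) / (g n - 1)) * ((n:ℝ) * (g n - 1)))
        atTop (nhds (1 * (-l))) := by
      apply hlog.mul
      have h5 : Tendsto (fun n : ℕ => -((n:ℝ) * (1 - g n))) atTop (nhds (-l)) := hg.neg
      refine h5.congr fun n => by ring
    rw [one_mul] at h4
    refine h4.congr' ?_
    filter_upwards [hne] with n hn
    have : g n - 1 ≠ 0 := sub_ne_zero.2 hn
    field_simp
  have hfin : Tendsto (fun n : ℕ => Real.exp ((n:ℝ) * Real.log (g n))) atTop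
      (nhds (Real.exp (-l))) := (Real.continuous_exp.tendsto _).comp hnlog
  refine hfin.congr' ?_
  filter_upwards [hpos] with n hn
  rw [Real.exp_nat_mul, Real.exp_log hn]

lemma ratio_tendsto {η x : ℝ} (hx : x < 0) {r : ℕ → ℝ}
    (hr0 : Tendsto r atTop (nhds 0)) (hrpos : ∀ᶠ n in atTop, 0 < r n) :
    Tendsto (fun n : ℕ => (Phi η - Phi (η + r n * x)) / (Phi η - Phi (η - r n)))
      atTop (nhds (-x)) := by
  have hd : 0 < stdphi η := stdphi_pos η
  have hslope := hasDerivAt_iff_tendsto_slope.1 (hasDerivAt_Phi η)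
  have hA : Tendsto (fun n : ℕ => slope Phi η (η + r n * x)) atTop (nhds (stdphi η)) := by
    refine hslope.comp ?_
    refine tendsto_nhdsWithin_of_tendsto_nhds_of_eventually_within _ ?_ ?_
    · have := (hr0.mul_const x).const_add η
      simpa using this
    · filter_upwards [hrpos] with n hn
      have : r n * x < 0 := mul_neg_of_pos_of_neg hn hx
      simp only [Set.mem_compl_iff, Set.mem_singleton_iff]
      intro h
      have : r n * x = 0 := by linarith [eq_of_sub_eq_zero (sub_eq_zero.2 h)]
      linarith
  have hB : Tendsto (fun n : ℕ => slope Phi η (η - r n)) atTop (nhds (stdphi η)) := by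
    refine hslope.comp ?_
    refine tendsto_nhdsWithin_of_tendsto_nhds_of_eventually_within _ ?_ ?_
    · have := (hr0.neg).const_add η
      simpa [sub_eq_add_neg] using this
    · filter_upwards [hrpos] with n hn
      simp only [Set.mem_compl_iff, Set.mem_singleton_iff]
      intro h
      have : r n = 0 := by linarith [sub_eq_zero.2 h.symm]
      linarith
  have hlim : Tendsto (fun n : ℕ =>
      (-(slope Phi η (η + r n * x)) * x) / (slope Phi η (η - r n))) atTop
      (nhds ((-(stdphi η) * x) / stdphi η)) := (hA.neg.mul_const x).div hB hd.ne'
  have hval : (-(stdphi η) * x) / stdphi η = -x := by field_simp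
  rw [hval] at hlim
  refine hlim.congr' ?_
  filter_upwards [hrpos] with n hn
  have hrne : r n ≠ 0 := hn.ne'
  have hxne : x ≠ 0 := hx.ne
  rw [slope_def_field, slope_def_field]
  have h1 : η + r n * x - η = r n * x := by ring
  have h2 : η - r n - η = -r n := by ring
  rw [h1, h2]
  have hbne : Phi (η - r n) - Phi η ≠ 0 := by
    have : Phi (η - r n) < Phi η := Phi_strictMono (by linarith)
    linarith
  have hbne' : Phi η - Phi (η - r n) ≠ 0 := by
    have : Phi (η - r n) < Phi η := Phi_strictMono (by linarith)
    linarith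
  field_simp
  ring

/-- With a_n = η - Φ_η^{-1}(1-1/n), the normalized maximum (Y_(n) - η)/a_n of n
i.i.d. truncated normals converges in distribution to the reverse Weibull with
shape 1: P((Y_(n) - η)/a_n ≤ x) → exp(x) for x ≤ 0. -/
theorem stmt7 {Ω : Type*} [MeasureSpace Ω] [IsProbabilityMeasure (ℙ : Measure Ω)]
    (η : ℝ) (Y : ℕ → Ω → ℝ) (hmeas : ∀ i, Measurable (Y i))
    (hindep : iIndepFun Y ℙ)
    (hlaw : ∀ i, Measure.map (Y i) ℙ = truncNormal η)
    (x : ℝ) (hx : x ≤ 0) :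
    Filter.Tendsto (fun n : ℕ =>
      (ℙ {ω | ∀ i < n, (Y i ω - η) / (η - truncQuantile η (1 - 1 / n)) ≤ x}).toReal)
      Filter.atTop (nhds (Real.exp x)) := by
  have hΦ : 0 < Phi η := Phi_pos η
  set q : ℕ → ℝ := fun n => truncQuantile η (1 - 1 / (n:ℝ)) with hqdef
  have hp : ∀ n : ℕ, 2 ≤ n → Phi (q n) = (1 - 1/(n:ℝ)) * Phi η := by
    intro n hn
    have hn2 : (2:ℝ) ≤ (n:ℝ) := by exact_mod_cast hn
    have h1 : (1:ℝ)/(n:ℝ) ≤ 1/2 := by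
      apply one_div_le_one_div_of_le <;> linarith
    have h0 : (0:ℝ) < 1/(n:ℝ) := by positivity
    refine Phi_PhiInv (η := η) (mul_pos (by linarith) hΦ) ?_
    nlinarith
  have hqlt : ∀ n : ℕ, 2 ≤ n → q n < η := by
    intro n hn
    have hn2 : (2:ℝ) ≤ (n:ℝ) := by exact_mod_cast hn
    have h0 : (0:ℝ) < 1/(n:ℝ) := by positivity
    have : Phi (q n) < Phi η := by
      rw [hp n hn]; nlinarith
    exact Phi_strictMono.lt_iff_lt.1 this
  have hptend : Tendsto (fun n : ℕ => (1 - 1/(n:ℝ)) * Phi η) atTop (nhds (Phi η)) := by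
    have h1 : Tendsto (fun n : ℕ => 1 - 1/(n:ℝ)) atTop (nhds 1) := by
      have := tendsto_one_div_atTop_nhds_zero_nat (𝕜 := ℝ)
      simpa using tendsto_const_nhds.sub this
    simpa using h1.mul_const (Phi η)
  have hq_tendsto : Tendsto q atTop (nhds η) := by
    refine tendsto_order.2 ⟨?_, ?_⟩
    · intro a ha
      have hpa : Phi a < Phi η := Phi_strictMono ha
      filter_upwards [hptend.eventually (eventually_gt_nhds hpa), eventually_ge_atTop 2]
        with n h1 h2
      have h3 : Phi a < Phi (q n) := by rw [hp n h2]; exact h1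
      exact Phi_strictMono.lt_iff_lt.1 h3
    · intro a ha
      filter_upwards [eventually_ge_atTop 2] with n h2
      exact lt_trans (hqlt n h2) ha
  have hr0 : Tendsto (fun n : ℕ => η - q n) atTop (nhds 0) := by
    have := hq_tendsto.const_sub η
    simpa using this
  have hrpos : ∀ᶠ n : ℕ in atTop, 0 < η - q n := by
    filter_upwards [eventually_ge_atTop 2] with n hn
    linarith [hqlt n hn]
  -- measure computation
  have hmeasure : ∀ n : ℕ, 0 < η - q n →
      (ℙ {ω | ∀ i < n, (Y i ω - η) / (η - q n) ≤ x}).toReal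
        = (Phi (η + (η - q n) * x) / Phi η) ^ n := by
    intro n hrp
    have hc : η + (η - q n) * x ≤ η := by nlinarith
    have hset : {ω | ∀ i < n, (Y i ω - η) / (η - q n) ≤ x}
        = ⋂ i ∈ Finset.range n, (Y i) ⁻¹' (Set.Iic (η + (η - q n) * x)) := by
      ext ω
      simp only [Set.mem_setOf_eq, Set.mem_iInter, Finset.mem_range, Set.mem_preimage,
        Set.mem_Iic]
      refine forall₂_congr fun i _ => ?_
      rw [div_le_iff₀ hrp]
      constructor <;> intro h <;> nlinarith
    rw [hset, hindep.meas_biInter (fun i _ => ⟨Set.Iic (η + (η - q n) * x),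
      measurableSet_Iic, rfl⟩)]
    have hprob : ∀ i, ℙ ((Y i) ⁻¹' (Set.Iic (η + (η - q n) * x)))
        = ENNReal.ofReal (Phi (η + (η - q n)*x) / Phi η) := by
      intro i
      rw [← Measure.map_apply (hmeas i) measurableSet_Iic, hlaw i, truncNormal_Iic hc]
    rw [Finset.prod_congr rfl (fun i _ => hprob i), Finset.prod_const, Finset.card_range,
      ENNReal.toReal_pow, ENNReal.toReal_ofReal (div_nonneg (Phi_nonneg _) hΦ.le)]
  rcases lt_or_eq_of_le hx with hxlt | hxeq
  · -- x < 0
    have hg : Tendsto (fun n : ℕ => (n:ℝ) * (1 - Phi (η + (η - q n) * x) / Phi η))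
        atTop (nhds (-x)) := by
      refine (ratio_tendsto (η := η) hxlt hr0 hrpos).congr' ?_
      filter_upwards [eventually_ge_atTop 2] with n hn
      have hnne : (n:ℝ) ≠ 0 := Nat.cast_ne_zero.2 (by omega)
      have hΦne : Phi η ≠ 0 := hΦ.ne'
      have hsimp : η - (η - q n) = q n := by ring
      rw [hsimp, hp n hn]
      have hD : Phi η - (1 - 1/(n:ℝ)) * Phi η = Phi η * (1/(n:ℝ)) := by ring
      rw [hD, div_eq_iff (by positivity : Phi η * (1/(n:ℝ)) ≠ 0)]
      field_simp
    have hpos : ∀ᶠ n : ℕ in atTop, 0 < Phi (η + (η - q n) * x) / Phi η :=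
      Filter.Eventually.of_forall fun n => div_pos (Phi_pos _) hΦ
    have hne : ∀ᶠ n : ℕ in atTop, Phi (η + (η - q n) * x) / Phi η ≠ 1 := by
      filter_upwards [hrpos] with n hn
      have hlt : η + (η - q n) * x < η := by nlinarith
      have := Phi_strictMono hlt
      intro h
      have := (div_eq_one_iff_eq hΦ.ne').1 h
      linarith
    have hfin := pow_tendsto_exp hg hpos hne
    rw [neg_neg] at hfin
    refine hfin.congr' ?_
    filter_upwards [hrpos] with n hn
    exact (hmeasure n hn).symm
  · -- x = 0
    subst hxeq
    rw [Real.exp_zero]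
    refine tendsto_const_nhds.congr' ?_
    filter_upwards [hrpos] with n hn
    rw [hmeasure n hn, mul_zero, add_zero, div_self hΦ.ne', one_pow]
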